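/- In the rally-point system with first server A, the probability of a sequence yielding α points for A and β points for B with exactly r A-interruptions and A scoring last equals C(α,r) C(β-1,r-1) p_a^{α-r} p_b^{β-r} ((1-p_a)(1-p_b))^r, for r ∈ {min(β,1),…,min(α,β)}; and with B scoring last it equals C(α,r-1) C(β-1,r-1) p_a^{α-r+1} p_b^{β-r} (1-p_a) ((1-p_a)(1-p_b))^{r-1}, for r ∈ {1,…,min(α,β-1)+1}. -/

import Mathlib

open scoped BigOperators
open Filter

/-- Rally-point scoring: a trajectory is the list of rally winners (`true` = player A);
every rally scores a point for its winner, and the winner serves the next rally.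
The first argument is the current server. -/
def rpWeight (pa pb : ℝ) : Bool → List Bool → ℝ
  | _, [] => 1
  | srv, w :: rest =>
      (if srv then (if w then pa else 1 - pa) else (if w then 1 - pb else pb)) *
        rpWeight pa pb w rest

/-- Points scored by player A. -/
def rpScoreA (g : List Bool) : ℕ := g.count true

/-- Points scored by player B. -/
def rpScoreB (g : List Bool) : ℕ := g.count false

/-- A scores the last point. -/
def rpLastA (g : List Bool) : Prop := g.getLast? = some true

/-- B scores the last point. -/
def rpLastB (g : List Bool) : Prop := g.getLast? = some false

/-- Number of maximal runs of `false` in a list, the first argument being the previous value. -/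
def falseRuns : Bool → List Bool → ℕ
  | _, [] => 0
  | prev, b :: rest => (if prev && !b then 1 else 0) + falseRuns b rest

/-- Number of A-interruptions: maximal blocks of consecutive points scored by B. -/
def rpInter (g : List Bool) : ℕ := falseRuns true g

/-- Probability of a set of trajectories in the rally-point model, first server A. -/
noncomputable def rpPr (pa pb : ℝ) (E : Set (List Bool)) : ℝ :=
  ∑' g : List Bool, Set.indicator E (rpWeight pa pb true) g

/-- Conditional expectation of `f` given the event `E` in the rally-point model, first server A. -/
noncomputable def rpCondExp (pa pb : ℝ) (E : Set (List Bool)) (f : List Bool → ℝ) : ℝ :=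
  (∑' g : List Bool, Set.indicator E (fun g => rpWeight pa pb true g * f g) g) / rpPr pa pb E


namespace RP

def S : ℕ → Finset (List Bool)
  | 0 => {[]}
  | n+1 => ((S n).image (List.cons true)) ∪ ((S n).image (List.cons false))

lemma mem_S : ∀ {n : ℕ} {g : List Bool}, g ∈ S n ↔ g.length = n := by
  intro n
  induction n with
  | zero => intro g; cases g <;> simp [S]
  | succ n ih =>
    intro g
    cases g with
    | nil => simp [S]
    | cons w t => cases w <;> simp [S, ih]

lemma count_add (g : List Bool) : g.count true + g.count false = g.length := by
  induction g with
  | nil => simp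
  | cons w t ih => cases w <;> simp [List.count_cons] <;> omega

lemma sum_S_succ (n : ℕ) (f : List Bool → ℝ) :
    ∑ g ∈ S (n+1), f g = (∑ g ∈ S n, f (true :: g)) + ∑ g ∈ S n, f (false :: g) := by
  show ∑ g ∈ _ ∪ _, f g = _
  rw [Finset.sum_union, Finset.sum_image (fun x _ y _ h => by simpa using h),
    Finset.sum_image (fun x _ y _ h => by simpa using h)]
  · rw [Finset.disjoint_left]
    rintro a ha hb
    simp only [Finset.mem_image] at ha hb
    obtain ⟨x, -, hx⟩ := ha
    obtain ⟨y, -, hy⟩ := hb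
    rw [← hx] at hy
    simp at hy

@[simp] lemma falseRuns_cons_true (prev : Bool) (g : List Bool) :
    falseRuns prev (true :: g) = falseRuns true g := by
  cases prev <;> simp [falseRuns]

lemma falseRuns_cons_false (prev : Bool) (g : List Bool) :
    falseRuns prev (false :: g) = (if prev then 1 else 0) + falseRuns false g := by
  cases prev <;> simp [falseRuns]

lemma rpWeight_cons (pa pb : ℝ) (prev w : Bool) (g : List Bool) :
    rpWeight pa pb prev (w :: g) =
      (if prev then (if w then pa else 1 - pa) else (if w then 1 - pb else pb)) *
        rpWeight pa pb w g := rfl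

noncomputable def Phi (pa pb : ℝ) : Bool → ℕ → ℕ → ℕ → Bool → ℝ
  | true, α, β, r, true =>
      if β = 0 then (if r = 0 ∧ 1 ≤ α then pa ^ α else 0)
      else if r = 0 then 0
      else (α.choose r : ℝ) * ((β-1).choose (r-1) : ℝ) * pa^(α-r) * pb^(β-r) *
        (1-pa)^r * (1-pb)^r
  | false, α, β, r, true =>
      if α = 0 then 0
      else ((α-1).choose r : ℝ) * (β.choose r : ℝ) * pa^(α-1-r) * pb^(β-r) *
        (1-pa)^r * (1-pb)^(r+1)
  | true, α, β, r, false =>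
      if β = 0 ∨ r = 0 then 0
      else (α.choose (r-1) : ℝ) * ((β-1).choose (r-1) : ℝ) * pa^(α+1-r) * pb^(β-r) *
        (1-pa)^r * (1-pb)^(r-1)
  | false, α, β, r, false =>
      if β = 0 then 0
      else if r = 0 then (if α = 0 then pb ^ β else 0)
      else if α = 0 then 0
      else ((α-1).choose (r-1) : ℝ) * (β.choose r : ℝ) * pa^(α-r) * pb^(β-r) *
        (1-pa)^r * (1-pb)^r

noncomputable def Phi2 (pa pb : ℝ) (prev d : Bool) (α β r : ℕ) (l : Bool) : ℝ :=
  if α = 0 ∧ β = 0 then (if d = l ∧ r = 0 then 1 else 0) else Phi pa pb prev α β r l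

noncomputable def SE (pa pb : ℝ) (prev d : Bool) (α β r : ℕ) (l : Bool) : ℝ :=
  ∑ g ∈ S (α + β),
    if g.count true = α ∧ g.count false = β ∧ g.getLastD d = l ∧ falseRuns prev g = r
    then rpWeight pa pb prev g else 0

lemma pascal_pow (x : ℝ) (m s : ℕ) :
    ((m+1).choose (s+1) : ℝ) * x ^ (m - s) =
      (m.choose s : ℝ) * x ^ (m - s) + (m.choose (s+1) : ℝ) * x * x ^ (m - (s+1)) := by
  rcases le_or_gt (s+1) m with h | h
  · obtain ⟨c, rfl⟩ := Nat.exists_eq_add_of_le h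
    have h1 : s + 1 + c - s = c + 1 := by omega
    have h2 : s + 1 + c - (s+1) = c := by omega
    rw [h1, h2, Nat.choose_succ_succ]
    push_cast; ring
  · have h2 : m.choose (s+1) = 0 := Nat.choose_eq_zero_of_lt h
    have h3 : (m+1).choose (s+1) = m.choose s := by
      rcases eq_or_lt_of_le (Nat.lt_succ_iff.mp h) with h4 | h4
      · subst h4; simp
      · rw [Nat.choose_eq_zero_of_lt (by omega), Nat.choose_eq_zero_of_lt h4]
    rw [h2, h3]; push_cast; ring

set_option linter.unnecessarySeqFocus false

lemma SE_succ (pa pb : ℝ) (prev d : Bool) (α β r : ℕ) (l : Bool) (h : 1 ≤ α + β) :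
    SE pa pb prev d α β r l =
      (if prev then pa else 1 - pb) *
        (if α = 0 then 0 else SE pa pb true true (α - 1) β r l) +
      (if prev then 1 - pa else pb) *
        (if β = 0 then 0 else if prev ∧ r = 0 then 0
          else SE pa pb false false α (β - 1) (if prev then r - 1 else r) l) := by
  obtain ⟨n, hn⟩ : ∃ n, α + β = n + 1 := ⟨α + β - 1, by omega⟩
  unfold SE
  rw [hn, sum_S_succ]
  congr 1
  · -- true-head branch
    rcases α with _ | a
    · rw [if_pos rfl, mul_zero]
      apply Finset.sum_eq_zero
      intro g hg
      rw [if_neg]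
      simp [List.count_cons]
    · obtain rfl : n = a + β := by omega
      rw [if_neg (Nat.succ_ne_zero a), show a + 1 - 1 = a from rfl, Finset.mul_sum]
      apply Finset.sum_congr rfl
      intro g hg
      rw [rpWeight_cons, mul_ite, mul_zero]
      refine if_congr ?_ (by cases prev <;> simp) rfl
      simp only [List.count_cons, List.getLastD_cons, falseRuns_cons_true]
      constructor
      · rintro ⟨h1, h2, h3, h4⟩
        exact ⟨by simpa using h1, by simpa using h2, h3, h4⟩
      · rintro ⟨h1, h2, h3, h4⟩
        exact ⟨by simp [h1], by simp [h2], h3, h4⟩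
  · -- false-head branch
    rcases β with _ | b
    · rw [if_pos rfl, mul_zero]
      apply Finset.sum_eq_zero
      intro g hg
      rw [if_neg]
      simp [List.count_cons]
    · obtain rfl : n = α + b := by omega
      rw [if_neg (Nat.succ_ne_zero b), show b + 1 - 1 = b from rfl]
      by_cases hpr : prev = true ∧ r = 0
      · rw [if_pos hpr, mul_zero]
        apply Finset.sum_eq_zero
        intro g hg
        rw [if_neg]
        rintro ⟨-, -, -, h4⟩
        rw [falseRuns_cons_false, hpr.1] at h4
        simp [hpr.2] at h4
      · rw [if_neg hpr, Finset.mul_sum]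
        apply Finset.sum_congr rfl
        intro g hg
        rw [rpWeight_cons, mul_ite, mul_zero]
        refine if_congr ?_ (by cases prev <;> simp) rfl
        simp only [List.count_cons, List.getLastD_cons, falseRuns_cons_false]
        cases prev
        · simp only [Bool.false_eq_true, if_false, zero_add]
          constructor
          · rintro ⟨h1, h2, h3, h4⟩
            exact ⟨by simpa using h1, by simpa using h2, h3, h4⟩
          · rintro ⟨h1, h2, h3, h4⟩
            exact ⟨by simp [h1], by simp [h2], h3, h4⟩
        · have hr : r ≠ 0 := fun hr0 => hpr ⟨rfl, hr0⟩
          simp only [if_true]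
          constructor
          · rintro ⟨h1, h2, h3, h4⟩
            exact ⟨by simpa using h1, by simpa using h2, h3, by omega⟩
          · rintro ⟨h1, h2, h3, h4⟩
            exact ⟨by simp [h1], by simp [h2], h3, by omega⟩

lemma Phi2_rec (pa pb : ℝ) (prev d : Bool) (α β r : ℕ) (l : Bool) (h : 1 ≤ α + β) :
    Phi2 pa pb prev d α β r l =
      (if prev then pa else 1 - pb) *
        (if α = 0 then 0 else Phi2 pa pb true true (α - 1) β r l) +
      (if prev then 1 - pa else pb) *
        (if β = 0 then 0 else if prev ∧ r = 0 then 0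
          else Phi2 pa pb false false α (β - 1) (if prev then r - 1 else r) l) := by
  cases prev <;> cases l <;>
    simp only [if_true, if_false, Bool.false_eq_true, false_and, true_and, ite_true, ite_false]
  · -- prev = false, l = false
    rcases β with _ | b
    · rcases α with _ | a
      · omega
      · rcases a with _ | a <;> simp [Phi2, Phi]
    · rcases r with _ | s
      · rcases α with _ | a <;> rcases b with _ | b' <;>
          simp [Phi2, Phi, pow_succ] <;> ring
      · rcases α with _ | a
        · rcases b with _ | b' <;> simp [Phi2, Phi]
        · rcases b with _ | b'
          · rcases s with _ | s' <;>
              simp [Phi2, Phi, Nat.choose_eq_zero_of_lt, Nat.succ_sub_succ] <;> ring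
          · have hp := pascal_pow pb (b' + 1) s
            simp only [Phi2, Phi, Nat.succ_sub_succ, Nat.succ_ne_zero, if_false,
              Nat.add_sub_cancel, and_false, false_and, ite_false, Nat.sub_zero, false_or]
            simp only [Nat.succ_sub_succ] at hp
            linear_combination ((a.choose s : ℝ) * pa^(a-s) * (1-pa)^(s+1) * (1-pb)^(s+1)) * hp
  · -- prev = false, l = true
    rcases α with _ | a
    · rcases β with _ | b
      · omega
      · rcases b with _ | b' <;> simp [Phi2, Phi]
    · rcases β with _ | b
      · rcases r with _ | s
        · rcases a with _ | a' <;> simp [Phi2, Phi] <;> ring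
        · rcases a with _ | a' <;> simp [Phi2, Phi, Nat.choose_eq_zero_of_lt]
      · rcases r with _ | s
        · simp only [Phi2, Phi, Nat.succ_sub_succ, Nat.succ_ne_zero, if_false,
            Nat.add_sub_cancel, and_false, false_and, ite_false, Nat.sub_zero, false_or,
            ite_true, if_true, Nat.choose_zero_right, Nat.cast_one]
          simp [pow_succ]
          ring
        · have hp := pascal_pow pb b s
          simp only [Phi2, Phi, Nat.succ_sub_succ, Nat.succ_ne_zero, if_false,
            Nat.add_sub_cancel, and_false, false_and, ite_false, Nat.sub_zero, false_or]
          try simp only [Nat.succ_sub_succ] at hp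
          linear_combination ((a.choose (s+1) : ℝ) * pa^(a-(s+1)) * (1-pa)^(s+1) * (1-pb)^(s+2)) * hp
  · -- prev = true, l = false
    rcases β with _ | b
    · rcases α with _ | a
      · omega
      · rcases a with _ | a' <;> simp [Phi2, Phi]
    · rcases r with _ | s
      · rcases α with _ | a <;> simp [Phi2, Phi]
      · rcases α with _ | a
        · rcases s with _ | s'
          · rcases b with _ | b' <;> simp [Phi2, Phi] <;> ring
          · rcases b with _ | b' <;> simp [Phi2, Phi, Nat.choose_eq_zero_of_lt]
        · rcases s with _ | t
          · rcases b with _ | b' <;>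
              simp [Phi2, Phi, Nat.succ_sub_succ, pow_succ] <;> ring
          · rcases b with _ | b'
            · simp [Phi2, Phi, Nat.choose_eq_zero_of_lt]
            · have hp := pascal_pow pa a t
              simp only [Phi2, Phi, Nat.succ_sub_succ, Nat.succ_ne_zero, if_false,
                Nat.add_sub_cancel, and_false, false_and, ite_false, Nat.sub_zero, false_or,
                or_self, or_false, false_or]
              try simp only [Nat.succ_sub_succ] at hp
              linear_combination (((b'+1).choose (t+1) : ℝ) * pb^(b'-t) * (1-pa)^(t+2) * (1-pb)^(t+1)) * hp
  · -- prev = true, l = true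
    rcases β with _ | b
    · rcases α with _ | a
      · omega
      · rcases r with _ | s
        · rcases a with _ | a' <;> simp [Phi2, Phi, pow_succ] <;> ring
        · rcases a with _ | a' <;> simp [Phi2, Phi]
    · rcases r with _ | s
      · rcases α with _ | a <;> simp [Phi2, Phi]
      · rcases α with _ | a
        · rcases b with _ | b' <;> simp [Phi2, Phi]
        · have hp := pascal_pow pa a s
          simp only [Phi2, Phi, Nat.succ_sub_succ, Nat.succ_ne_zero, if_false,
            Nat.add_sub_cancel, and_false, false_and, ite_false, Nat.sub_zero, false_or]
          try simp only [Nat.succ_sub_succ] at hp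
          linear_combination ((b.choose s : ℝ) * pb^(b-s) * (1-pa)^(s+1) * (1-pb)^(s+1)) * hp

lemma SE_eq (pa pb : ℝ) : ∀ n α β, α + β = n → ∀ (prev d : Bool) (r : ℕ) (l : Bool),
    SE pa pb prev d α β r l = Phi2 pa pb prev d α β r l := by
  intro n
  induction n with
  | zero =>
    intro α β h prev d r l
    obtain rfl : α = 0 := by omega
    obtain rfl : β = 0 := by omega
    simp [SE, S, Phi2, rpWeight, falseRuns, eq_comm]
  | succ n ih =>
    intro α β h prev d r l
    rw [SE_succ pa pb prev d α β r l (by omega), Phi2_rec pa pb prev d α β r l (by omega)]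
    congr 1
    · congr 1
      split_ifs with h1
      · rfl
      · exact ih (α - 1) β (by omega) true true r l
    · congr 1
      split_ifs <;>
        first
          | rfl
          | exact ih α (β - 1) (by omega) false false _ l

lemma rpPr_eq (pa pb : ℝ) (α β r : ℕ) (l : Bool) (h : 1 ≤ α + β) :
    rpPr pa pb {g : List Bool |
        g.count true = α ∧ g.count false = β ∧ g.getLast? = some l ∧ falseRuns true g = r} =
      SE pa pb true true α β r l := by
  unfold rpPr SE
  rw [tsum_eq_sum (s := S (α + β)) ?_]
  · apply Finset.sum_congr rfl
    intro g hg
    have hlen : g.length = α + β := mem_S.mp hg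
    have hlast : (g.getLast? = some l) ↔ (g.getLastD true = l) := by
      cases g with
      | nil => simp at hlen; omega
      | cons w t =>
        rw [List.getLastD_eq_getLast?,
          List.getLast?_eq_getLast (l := w :: t) (by simp)]
        simp
    by_cases hc : g.count true = α ∧ g.count false = β ∧ g.getLastD true = l ∧
        falseRuns true g = r
    · rw [if_pos hc, Set.indicator_of_mem]
      exact ⟨hc.1, hc.2.1, hlast.mpr hc.2.2.1, hc.2.2.2⟩
    · rw [if_neg hc, Set.indicator_of_notMem]
      intro hmem
      exact hc ⟨hmem.1, hmem.2.1, hlast.mp hmem.2.2.1, hmem.2.2.2⟩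
  · intro g hg
    apply Set.indicator_of_notMem
    intro hmem
    exact hg (mem_S.mpr (by rw [← count_add g, hmem.1, hmem.2.1]))

end RP

theorem stmt_12 (α β : ℕ) (pa pb : ℝ) (hpa0 : 0 ≤ pa) (hpa1 : pa ≤ 1)
    (hpb0 : 0 ≤ pb) (hpb1 : pb ≤ 1) :
    (1 ≤ α → ∀ r : ℕ, min β 1 ≤ r → r ≤ min α β →
      rpPr pa pb {g : List Bool | rpScoreA g = α ∧ rpScoreB g = β ∧ rpLastA g ∧ rpInter g = r} =
        (α.choose r : ℝ) * ((β - 1).choose (r - 1) : ℝ) * pa ^ (α - r) * pb ^ (β - r) *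
          ((1 - pa) * (1 - pb)) ^ r) ∧
    (1 ≤ β → ∀ r : ℕ, 1 ≤ r → r ≤ min α (β - 1) + 1 →
      rpPr pa pb {g : List Bool | rpScoreA g = α ∧ rpScoreB g = β ∧ rpLastB g ∧ rpInter g = r} =
        (α.choose (r - 1) : ℝ) * ((β - 1).choose (r - 1) : ℝ) * pa ^ (α + 1 - r) *
          pb ^ (β - r) * (1 - pa) * ((1 - pa) * (1 - pb)) ^ (r - 1)) := by
  constructor
  · intro hA r hr1 hr2
    have h1 : 1 ≤ α + β := by omega
    have e1 : rpPr pa pb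
        {g : List Bool | rpScoreA g = α ∧ rpScoreB g = β ∧ rpLastA g ∧ rpInter g = r} =
        RP.SE pa pb true true α β r true := RP.rpPr_eq pa pb α β r true h1
    rw [e1, RP.SE_eq pa pb (α + β) α β rfl true true r true]
    rcases β with _ | b
    · obtain rfl : r = 0 := by omega
      simp [RP.Phi2, RP.Phi, hA, show ¬(α = 0) from by omega]
    · obtain ⟨s, rfl⟩ : ∃ s, r = s + 1 := ⟨r - 1, by omega⟩
      simp only [RP.Phi2, RP.Phi, Nat.succ_sub_succ, Nat.succ_ne_zero, if_false,
        and_false, ite_false, Nat.add_sub_cancel, Nat.sub_zero, mul_pow]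
      ring
  · intro hB r hr1 hr2
    have h1 : 1 ≤ α + β := by omega
    have e1 : rpPr pa pb
        {g : List Bool | rpScoreA g = α ∧ rpScoreB g = β ∧ rpLastB g ∧ rpInter g = r} =
        RP.SE pa pb true true α β r false := RP.rpPr_eq pa pb α β r false h1
    rw [e1, RP.SE_eq pa pb (α + β) α β rfl true true r false]
    obtain ⟨b, rfl⟩ : ∃ b, β = b + 1 := ⟨β - 1, by omega⟩
    obtain ⟨s, rfl⟩ : ∃ s, r = s + 1 := ⟨r - 1, by omega⟩
    simp only [RP.Phi2, RP.Phi, Nat.succ_sub_succ, Nat.succ_ne_zero, if_false,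
      and_false, ite_false, Nat.add_sub_cancel, Nat.sub_zero, mul_pow, or_self,
      false_or, or_false]
    ring
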